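/- Let φ be the standard Gaussian density and He_β the probabilist's Hermite polynomial of degree β, so that φ^{(β)}(x) = (−1)^β φ(x) He_β(x). Let σ : ℝ → ℝ be polynomially bounded and, for λ ∈ (0,1], let Z_λ(y) := E_{z∼N(0,1)}[φ(y − √λ σ(z))]. Then lim_{λ→0⁺} ∫_ℝ (φ^{(β)}(y))² / Z_λ(y) dy = β!. -/

import Mathlib

open MeasureTheory ProbabilityTheory Filter

/-- Standard Gaussian measure on ℝ. -/
noncomputable def stdG : Measure ℝ := gaussianReal 0 1

/-- Standard Gaussian density on ℝ. -/
noncomputable def gphi (x : ℝ) : ℝ := Real.exp (-(x ^ 2) / 2) / Real.sqrt (2 * Real.pi)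

/-- Probabilist's Hermite polynomial of degree `n`, evaluated at `x : ℝ`. -/
noncomputable def He (n : ℕ) (x : ℝ) : ℝ := Polynomial.aeval x (Polynomial.hermite n)

/-- σ is polynomially bounded. -/
def PolyBounded (σ : ℝ → ℝ) : Prop :=
  ∃ (C : ℝ) (k : ℕ), 0 < C ∧ 0 < k ∧ ∀ x : ℝ, |σ x| ≤ C * (1 + |x| ^ k)

namespace Stmt10Aux

open Polynomial

lemma derivative_hermite (n : ℕ) :
    derivative (hermite (n + 1)) = (n + 1 : ℕ) • hermite n := by
  induction n with
  | zero => simp [hermite_one, hermite_zero]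
  | succ n ih =>
    have h2 : hermite (n + 2) = X * hermite (n+1) - derivative (hermite (n+1)) :=
      hermite_succ (n+1)
    have h1 : hermite (n + 1) = X * hermite n - derivative (hermite n) := hermite_succ n
    rw [h2, derivative_sub, derivative_mul, derivative_X, ih, derivative_smul, one_mul]
    calc hermite (n+1) + X * ((n + 1 : ℕ) • hermite n) - (n + 1 : ℕ) • derivative (hermite n)
        = hermite (n+1) + (n + 1 : ℕ) • (X * hermite n - derivative (hermite n)) := by
          rw [smul_sub]; rw [mul_smul_comm]; abel
      _ = (n + 2 : ℕ) • hermite (n+1) := by rw [← h1]; module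

lemma integrable_poly_gauss {b : ℝ} (hb : 0 < b) (p : ℝ[X]) :
    Integrable (fun x : ℝ => p.eval x * Real.exp (-b * x ^ 2)) := by
  induction p using Polynomial.induction_on' with
  | add p q hp hq => simpa [add_mul, Pi.add_def] using hp.add hq
  | monomial n a =>
    simp only [eval_monomial]
    have h := integrable_rpow_mul_exp_neg_mul_sq hb (s := (n : ℝ))
      (lt_of_lt_of_le neg_one_lt_zero (Nat.cast_nonneg n))
    have h3 : Integrable (fun x : ℝ => x ^ n * Real.exp (-b * x ^ 2)) :=
      h.congr (Filter.Eventually.of_forall fun x => by simp [Real.rpow_natCast])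
    simpa [mul_assoc] using h3.const_mul a

lemma integrable_poly_expabs_gauss (p : ℝ[X]) (M : ℝ) :
    Integrable (fun x : ℝ => p.eval x * (Real.exp (M * |x|) * Real.exp (-(x ^ 2) / 2))) := by
  have key := ((integrable_poly_gauss (b := (4:ℝ)⁻¹) (by norm_num) p).abs.const_mul
    (Real.exp (M ^ 2)))
  refine key.mono' ?_ (Filter.Eventually.of_forall fun x => ?_)
  · exact (p.continuous_aeval.mul ((by continuity : Continuous fun x : ℝ => Real.exp (M * |x|)).mul
      (by continuity))).aestronglyMeasurable
  · rw [Real.norm_eq_abs, abs_mul, abs_mul, Real.abs_exp, Real.abs_exp]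
    have hM : M * |x| ≤ M ^ 2 + x ^ 2 / 4 := by nlinarith [sq_nonneg (M - |x| / 2), sq_abs x]
    have h1 : Real.exp (M * |x|) * Real.exp (-(x ^ 2) / 2)
        ≤ Real.exp (M ^ 2) * Real.exp (-(4:ℝ)⁻¹ * x ^ 2) := by
      rw [← Real.exp_add, ← Real.exp_add]
      exact Real.exp_le_exp.2 (by linarith)
    calc |p.eval x| * (Real.exp (M * |x|) * Real.exp (-(x ^ 2) / 2))
        ≤ |p.eval x| * (Real.exp (M ^ 2) * Real.exp (-(4:ℝ)⁻¹ * x ^ 2)) :=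
          mul_le_mul_of_nonneg_left h1 (abs_nonneg _)
      _ = Real.exp (M ^ 2) * |p.eval x * Real.exp (-(4:ℝ)⁻¹ * x ^ 2)| := by
          rw [abs_mul, Real.abs_exp]; ring

lemma hasDerivAt_gaussExp (x : ℝ) :
    HasDerivAt (fun x : ℝ => Real.exp (-(x ^ 2) / 2)) (-x * Real.exp (-(x ^ 2) / 2)) x := by
  have h : HasDerivAt (fun x : ℝ => -(x ^ 2) / 2) (-x) x := by
    have := ((hasDerivAt_pow 2 x).neg).div_const 2
    simpa using this.congr_deriv (by ring)
  simpa [mul_comm] using h.exp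

lemma integrable_He_mul_He (m n : ℕ) :
    Integrable (fun x : ℝ =>
      (aeval x (hermite m) * aeval x (hermite n)) * Real.exp (-(x ^ 2) / 2)) := by
  have h := integrable_poly_gauss (b := (2:ℝ)⁻¹) (by norm_num)
    ((hermite m * hermite n).map (algebraMap ℤ ℝ))
  refine h.congr (Filter.Eventually.of_forall fun x => ?_)
  simp only [eval_map, ← aeval_def, map_mul]
  ring_nf

lemma He_gauss_hasDerivAt (n : ℕ) (x : ℝ) :
    HasDerivAt (fun x : ℝ => aeval x (hermite n) * Real.exp (-(x ^ 2) / 2))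
      (-(aeval x (hermite (n + 1)) * Real.exp (-(x ^ 2) / 2))) x := by
  have h := ((hermite n).hasDerivAt_aeval (𝕜 := ℝ) x).mul (hasDerivAt_gaussExp x)
  have hs : (aeval x (hermite (n+1)) : ℝ) =
      x * aeval x (hermite n) - aeval x (derivative (hermite n)) := by
    rw [hermite_succ]; simp
  refine h.congr_deriv ?_
  rw [hs]; ring

lemma He_sq_integral (n : ℕ) :
    ∫ x : ℝ, aeval x (hermite n) ^ 2 * Real.exp (-(x ^ 2) / 2)
      = n.factorial * Real.sqrt (2 * Real.pi) := by
  induction n with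
  | zero =>
    have h := integral_gaussian (2:ℝ)⁻¹
    simp only [hermite_zero, map_one, one_pow, one_mul, Nat.factorial_zero, Nat.cast_one]
    rw [show ∫ x : ℝ, Real.exp (-(x ^ 2) / 2) = ∫ x : ℝ, Real.exp (-(2:ℝ)⁻¹ * x ^ 2) by
      congr 1; funext x; ring_nf]
    rw [h]
    rw [show Real.pi / (2:ℝ)⁻¹ = 2 * Real.pi by ring]
  | succ n ih =>
    have hu : ∀ x : ℝ, HasDerivAt (fun x : ℝ => (aeval x (hermite (n+1)) : ℝ))
        ((fun x : ℝ => ((n:ℝ) + 1) * aeval x (hermite n)) x) x := by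
      intro x
      have h := (hermite (n+1)).hasDerivAt_aeval (𝕜 := ℝ) x
      rw [derivative_hermite] at h
      simpa using h
    have hv := fun x => He_gauss_hasDerivAt n x
    have huv' : Integrable ((fun x : ℝ => (aeval x (hermite (n+1)) : ℝ)) *
        (fun x : ℝ => -(aeval x (hermite (n + 1)) * Real.exp (-(x ^ 2) / 2)))) := by
      refine (integrable_He_mul_He (n+1) (n+1)).neg.congr
        (Filter.Eventually.of_forall fun x => ?_)
      simp only [Pi.mul_apply, Pi.neg_apply]; ring
    have hu'v : Integrable ((fun x : ℝ => ((n:ℝ) + 1) * aeval x (hermite n)) *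
        (fun x : ℝ => aeval x (hermite n) * Real.exp (-(x ^ 2) / 2))) := by
      refine ((integrable_He_mul_He n n).const_mul ((n:ℝ)+1)).congr
        (Filter.Eventually.of_forall fun x => ?_)
      simp only [Pi.mul_apply]; ring
    have huv : Integrable ((fun x : ℝ => (aeval x (hermite (n+1)) : ℝ)) *
        (fun x : ℝ => aeval x (hermite n) * Real.exp (-(x ^ 2) / 2))) := by
      refine (integrable_He_mul_He (n+1) n).congr
        (Filter.Eventually.of_forall fun x => ?_)
      simp only [Pi.mul_apply]; ring
    have key := integral_mul_deriv_eq_deriv_mul_of_integrable (fun x _ => hu x) (fun x _ => hv x) huv' hu'v huv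
    have lhs : ∫ x : ℝ, (aeval x (hermite (n+1)) : ℝ) *
        (-(aeval x (hermite (n + 1)) * Real.exp (-(x ^ 2) / 2)))
        = -∫ x : ℝ, aeval x (hermite (n+1)) ^ 2 * Real.exp (-(x ^ 2) / 2) := by
      rw [← integral_neg]; congr 1; funext x; ring
    have rhs : ∫ x : ℝ, ((n:ℝ) + 1) * aeval x (hermite n) *
        (aeval x (hermite n) * Real.exp (-(x ^ 2) / 2))
        = ((n:ℝ) + 1) * ∫ x : ℝ, aeval x (hermite n) ^ 2 * Real.exp (-(x ^ 2) / 2) := by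
      rw [← integral_const_mul]; congr 1; funext x; ring
    rw [lhs, rhs, ih, neg_inj] at key
    rw [key, Nat.factorial_succ]
    push_cast
    ring

lemma gphi_pos (x : ℝ) : 0 < gphi x :=
  div_pos (Real.exp_pos _) (Real.sqrt_pos.2 (by positivity))

lemma continuous_gphi : Continuous gphi := by
  unfold gphi
  exact (Real.continuous_exp.comp (by continuity)).div_const _

lemma gphi_le (x : ℝ) : gphi x ≤ (Real.sqrt (2 * Real.pi))⁻¹ := by
  rw [gphi, div_le_iff₀ (Real.sqrt_pos.2 (by positivity))]
  rw [inv_mul_cancel₀ (ne_of_gt (Real.sqrt_pos.2 (by positivity)))]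
  exact Real.exp_le_one_iff.2 (by nlinarith [sq_nonneg x])

lemma gphi_translate_lower {M t y : ℝ} (ht : |t| ≤ M) :
    Real.exp (-(M ^ 2) / 2) * (Real.exp (-(M * |y|)) * gphi y) ≤ gphi (y - t) := by
  unfold gphi
  have hS : (0:ℝ) < Real.sqrt (2 * Real.pi) := Real.sqrt_pos.2 (by positivity)
  have key : Real.exp (-(M ^ 2) / 2) * (Real.exp (-(M * |y|)) * Real.exp (-(y ^ 2) / 2))
      ≤ Real.exp (-((y - t) ^ 2) / 2) := by
    rw [← Real.exp_add, ← Real.exp_add]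
    apply Real.exp_le_exp.2
    have h1 : t ^ 2 ≤ M ^ 2 := sq_le_sq' (neg_le_of_abs_le ht) (le_of_abs_le ht)
    have h2 : |t * y| ≤ M * |y| := by
      rw [abs_mul]; exact mul_le_mul_of_nonneg_right ht (abs_nonneg y)
    nlinarith [neg_abs_le (t * y), le_abs_self (t * y)]
  calc Real.exp (-(M ^ 2) / 2) * (Real.exp (-(M * |y|)) * (Real.exp (-(y ^ 2) / 2) / Real.sqrt (2 * Real.pi)))
      = (Real.exp (-(M ^ 2) / 2) * (Real.exp (-(M * |y|)) * Real.exp (-(y ^ 2) / 2))) / Real.sqrt (2 * Real.pi) := by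
        ring
    _ ≤ Real.exp (-((y - t) ^ 2) / 2) / Real.sqrt (2 * Real.pi) := by gcongr

end Stmt10Aux

open Stmt10Aux Polynomial

/-- With `φ^{(β)}(y) = (−1)^β φ(y) He_β(y)` and `Z_λ(y) = E_z[φ(y − √λ σ(z))]`,
one has `lim_{λ→0⁺} ∫ (φ^{(β)}(y))² / Z_λ(y) dy = β!`. Since
`(φ^{(β)}(y))² = (φ(y) He_β(y))²`, the integrand is written with the latter. -/
theorem stmt10 (σ : ℝ → ℝ) (hmeas : Measurable σ) (hpb : PolyBounded σ) (β : ℕ) :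
    Tendsto
      (fun lam : ℝ =>
        ∫ y : ℝ, (gphi y * He β y) ^ 2 /
          (∫ z, gphi (y - Real.sqrt lam * σ z) ∂stdG))
      (nhdsWithin 0 (Set.Ioi 0))
      (nhds (Nat.factorial β)) := by
  obtain ⟨C, k, hC, hk, hσ⟩ := hpb
  have hprob : IsProbabilityMeasure stdG := by unfold stdG; infer_instance
  set M : ℝ := 2 * C with hMdef
  have hM0 : 0 < M := by positivity
  set cM : ℝ := Real.exp (-(M ^ 2) / 2) with hcMdef
  have hcM : 0 < cM := Real.exp_pos _
  set c₀ : ℝ := (stdG (Set.Icc (-1:ℝ) 1)).toReal with hc₀def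
  have hc₀ : 0 < c₀ := by
    refine ENNReal.toReal_pos ?_ (measure_ne_top _ _)
    intro h0
    have habs : (volume : Measure ℝ) ≪ stdG := gaussianReal_absolutelyContinuous' 0 one_ne_zero
    have := habs h0
    rw [Real.volume_Icc] at this
    norm_num at this
  -- measurability of the inner integrand
  have hinmeas : ∀ s y : ℝ, Measurable (fun z : ℝ => gphi (y - s * σ z)) := fun s y =>
    continuous_gphi.measurable.comp (measurable_const.sub (measurable_const.mul hmeas))
  have hZint : ∀ s y : ℝ, Integrable (fun z : ℝ => gphi (y - s * σ z)) stdG := by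
    intro s y
    refine Integrable.mono' (integrable_const ((Real.sqrt (2 * Real.pi))⁻¹))
      (hinmeas s y).aestronglyMeasurable (ae_of_all _ fun z => ?_)
    rw [Real.norm_eq_abs, abs_of_pos (gphi_pos _)]
    exact gphi_le _
  -- lower bound for Z on (0, 1]
  have hZlow : ∀ lam ∈ Set.Ioc (0:ℝ) 1, ∀ y : ℝ,
      c₀ * (cM * (Real.exp (-(M * |y|)) * gphi y))
        ≤ ∫ z, gphi (y - Real.sqrt lam * σ z) ∂stdG := by
    intro lam hlam y
    have hsl : Real.sqrt lam ≤ 1 := by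
      rw [show (1:ℝ) = Real.sqrt 1 by simp]
      exact Real.sqrt_le_sqrt hlam.2
    have hbd : ∀ z ∈ Set.Icc (-1:ℝ) 1, |Real.sqrt lam * σ z| ≤ M := by
      intro z hz
      have hz1 : |z| ≤ 1 := abs_le.2 ⟨hz.1, hz.2⟩
      have hσz : |σ z| ≤ M := by
        refine le_trans (hσ z) ?_
        have : |z| ^ k ≤ 1 := pow_le_one₀ (abs_nonneg z) hz1
        rw [hMdef]; nlinarith
      rw [abs_mul, abs_of_nonneg (Real.sqrt_nonneg _)]
      calc Real.sqrt lam * |σ z| ≤ 1 * M :=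
            mul_le_mul hsl hσz (abs_nonneg _) zero_le_one
        _ = M := one_mul M
    calc c₀ * (cM * (Real.exp (-(M * |y|)) * gphi y))
        = ∫ _ in Set.Icc (-1:ℝ) 1, cM * (Real.exp (-(M * |y|)) * gphi y) ∂stdG := by
          rw [setIntegral_const, smul_eq_mul, hc₀def]; rfl
      _ ≤ ∫ z in Set.Icc (-1:ℝ) 1, gphi (y - Real.sqrt lam * σ z) ∂stdG := by
          refine setIntegral_mono_on (integrableOn_const (measure_ne_top _ _))
            ((hZint _ y).integrableOn) measurableSet_Icc (fun z hz => ?_)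
          exact gphi_translate_lower (hbd z hz)
      _ ≤ ∫ z, gphi (y - Real.sqrt lam * σ z) ∂stdG :=
          setIntegral_le_integral (hZint _ y) (ae_of_all _ fun z => (gphi_pos _).le)
  have hlow_pos : ∀ y : ℝ, 0 < c₀ * (cM * (Real.exp (-(M * |y|)) * gphi y)) := fun y => by
    have := gphi_pos y; have := Real.exp_pos (-(M * |y|)); positivity
  -- the dominating function
  set g : ℝ → ℝ := fun y =>
    (gphi y * He β y) ^ 2 / (c₀ * (cM * (Real.exp (-(M * |y|)) * gphi y))) with hgdef
  -- g is integrable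
  set q : ℝ[X] := (hermite β * hermite β).map (algebraMap ℤ ℝ) with hqdef
  have hqeval : ∀ y : ℝ, q.eval y = He β y * He β y := by
    intro y
    rw [hqdef]
    simp only [eval_map, ← aeval_def, map_mul]
    rfl
  have hg_eq : ∀ y : ℝ, g y = (c₀ * cM * Real.sqrt (2 * Real.pi))⁻¹ *
      (q.eval y * (Real.exp (M * |y|) * Real.exp (-(y ^ 2) / 2))) := by
    intro y
    rw [hgdef, hqeval]
    simp only
    unfold gphi He
    have hS : Real.sqrt (2 * Real.pi) ≠ 0 := ne_of_gt (Real.sqrt_pos.2 (by positivity))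
    have hE1 : Real.exp (-(M * |y|)) = (Real.exp (M * |y|))⁻¹ := by
      rw [← Real.exp_neg]
    rw [hE1]
    field_simp
  have hg_int : Integrable g := by
    rw [show g = fun y => (c₀ * cM * Real.sqrt (2 * Real.pi))⁻¹ *
        (q.eval y * (Real.exp (M * |y|) * Real.exp (-(y ^ 2) / 2))) from funext hg_eq]
    exact (integrable_poly_expabs_gauss q M).const_mul _
  -- limit of inner integral
  have hZtend : ∀ y : ℝ,
      Tendsto (fun lam : ℝ => ∫ z, gphi (y - Real.sqrt lam * σ z) ∂stdG)
        (nhdsWithin 0 (Set.Ioi 0)) (nhds (gphi y)) := by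
    intro y
    have key := tendsto_integral_filter_of_dominated_convergence (μ := stdG)
      (F := fun lam : ℝ => fun z : ℝ => gphi (y - Real.sqrt lam * σ z))
      (f := fun _ : ℝ => gphi y)
      (l := nhdsWithin 0 (Set.Ioi 0))
      (fun _ => (Real.sqrt (2 * Real.pi))⁻¹)
      (Eventually.of_forall fun lam => (hinmeas _ y).aestronglyMeasurable)
      (Eventually.of_forall fun lam => ae_of_all _ fun z => by
        rw [Real.norm_eq_abs, abs_of_pos (gphi_pos _)]; exact gphi_le _)
      (integrable_const _)
      (ae_of_all _ fun z => ?_)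
    · simpa using key
    · have h1 : Tendsto (fun lam : ℝ => Real.sqrt lam) (nhdsWithin 0 (Set.Ioi 0)) (nhds 0) := by
        have := (Real.continuous_sqrt.tendsto 0).mono_left
          (nhdsWithin_le_nhds (a := (0:ℝ)) (s := Set.Ioi 0))
        simpa using this
      have h2 : Tendsto (fun lam : ℝ => y - Real.sqrt lam * σ z)
          (nhdsWithin 0 (Set.Ioi 0)) (nhds y) := by
        have := tendsto_const_nhds (x := y) (f := nhdsWithin (0:ℝ) (Set.Ioi 0)) |>.sub
          (h1.mul_const (σ z))
        simpa using this
      exact (continuous_gphi.tendsto y).comp h2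
  -- value of the limit integral
  have hval : ∫ y : ℝ, (gphi y * He β y) ^ 2 / gphi y = (Nat.factorial β : ℝ) := by
    have hS : Real.sqrt (2 * Real.pi) ≠ 0 := ne_of_gt (Real.sqrt_pos.2 (by positivity))
    have hstep : ∀ y : ℝ, (gphi y * He β y) ^ 2 / gphi y
        = (aeval y (hermite β) ^ 2 * Real.exp (-(y ^ 2) / 2)) / Real.sqrt (2 * Real.pi) := by
      intro y
      unfold gphi He
      have hE : Real.exp (-(y ^ 2) / 2) ≠ 0 := Real.exp_ne_zero _
      field_simp
    simp only [hstep]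
    rw [integral_div, He_sq_integral β, mul_div_assoc, div_self hS, mul_one]
  -- strong measurability of Z in y
  have hZmeas : ∀ lam : ℝ,
      StronglyMeasurable (fun y : ℝ => ∫ z, gphi (y - Real.sqrt lam * σ z) ∂stdG) := by
    intro lam
    have hf : Measurable (fun p : ℝ × ℝ => gphi (p.1 - Real.sqrt lam * σ p.2)) :=
      continuous_gphi.measurable.comp
        (measurable_fst.sub (measurable_const.mul (hmeas.comp measurable_snd)))
    exact hf.stronglyMeasurable.integral_prod_right'
  have hnum : Continuous (fun y : ℝ => (gphi y * He β y) ^ 2) := by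
    have : Continuous (He β) := (hermite β).continuous_aeval
    exact (continuous_gphi.mul this).pow 2
  -- main dominated convergence
  have main := tendsto_integral_filter_of_dominated_convergence (μ := (volume : Measure ℝ))
    (F := fun lam : ℝ => fun y : ℝ => (gphi y * He β y) ^ 2 /
      (∫ z, gphi (y - Real.sqrt lam * σ z) ∂stdG))
    (f := fun y : ℝ => (gphi y * He β y) ^ 2 / gphi y)
    (l := nhdsWithin 0 (Set.Ioi 0)) g
    (Eventually.of_forall fun lam =>
      (hnum.measurable.div (hZmeas lam).measurable).aestronglyMeasurable)
    ?_ hg_int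
    (ae_of_all _ fun y => Tendsto.div tendsto_const_nhds (hZtend y) (ne_of_gt (gphi_pos y)))
  · rw [hval] at main
    exact main
  · filter_upwards [Ioc_mem_nhdsGT (by norm_num : (0:ℝ) < 1)] with lam hlam
    refine ae_of_all _ fun y => ?_
    have hz := hZlow lam hlam y
    have hZpos : 0 < ∫ z, gphi (y - Real.sqrt lam * σ z) ∂stdG :=
      lt_of_lt_of_le (hlow_pos y) hz
    rw [Real.norm_eq_abs, abs_of_nonneg (div_nonneg (sq_nonneg _) hZpos.le)]
    rw [hgdef]
    exact _root_.div_le_div_of_nonneg_left (sq_nonneg _) (hlow_pos y) hz
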